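/- Let C ⊆ ℝⁿ be an open convex cone and f : C ∩ ℚⁿ → ℝ≥0 a function that is positively homogeneous of degree one over ℚ, subadditive, and vanishes on a ℚ-basis of ℚⁿ contained in C. Then f extends uniquely to a continuous function on all of C. -/

import Mathlib

/-- A point of `ℝⁿ` all of whose coordinates are rational. -/
def IsRatPoint {n : ℕ} (x : Fin n → ℝ) : Prop := ∀ i, ∃ q : ℚ, x i = (q : ℝ)

theorem stmt1 {n : ℕ} (C : Set (Fin n → ℝ)) (f : (Fin n → ℝ) → ℝ)
    (hopen : IsOpen C)
    (hcone : ∀ x ∈ C, ∀ c : ℝ, 0 < c → c • x ∈ C)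
    (hadd : ∀ x ∈ C, ∀ y ∈ C, x + y ∈ C)
    (hnonneg : ∀ x ∈ C, IsRatPoint x → 0 ≤ f x)
    (hhom : ∀ x ∈ C, IsRatPoint x → ∀ q : ℚ, 0 < q → f ((q : ℝ) • x) = (q : ℝ) * f x)
    (hsub : ∀ x ∈ C, ∀ y ∈ C, IsRatPoint x → IsRatPoint y → f (x + y) ≤ f x + f y)
    (a : Fin n → (Fin n → ℝ))
    (haC : ∀ i, a i ∈ C) (haQ : ∀ i, IsRatPoint (a i))
    (hbasis : LinearIndependent ℝ a)
    (hzero : ∀ i, f (a i) = 0) :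
    ∃! g : C → ℝ, Continuous g ∧ ∀ x : C, IsRatPoint x.val → g x = f x.val := by
  classical
  -- rational coordinates of the basis vectors
  choose r hr using haQ
  -- basic closure properties of rational points
  have hratadd : ∀ u v : Fin n → ℝ, IsRatPoint u → IsRatPoint v → IsRatPoint (u + v) := by
    intro u v hu hv j
    obtain ⟨q1, h1⟩ := hu j; obtain ⟨q2, h2⟩ := hv j
    exact ⟨q1 + q2, by simp [h1, h2]⟩
  have hratsmul : ∀ (q : ℚ) (u : Fin n → ℝ), IsRatPoint u → IsRatPoint ((q : ℝ) • u) := by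
    intro q u hu j
    obtain ⟨q1, h1⟩ := hu j
    exact ⟨q * q1, by simp [h1]⟩
  -- the rational matrix whose columns are the basis vectors
  set Aq : Matrix (Fin n) (Fin n) ℚ := Matrix.of (fun i j => r j i) with hAqdef
  have hAq : ∀ i j, (Aq i j : ℝ) = a j i := fun i j => (hr j i).symm
  -- injectivity of the associated linear map over ℚ
  have hmv0 : ∀ v : Fin n → ℚ, Aq.mulVec v = 0 → v = 0 := by
    intro v hv
    have hli := Fintype.linearIndependent_iff.mp hbasis (fun i => (v i : ℝ))
    have hsum : ∑ i, (v i : ℝ) • a i = 0 := by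
      funext k
      have h0 : (∑ j, Aq k j * v j : ℚ) = 0 := congrFun hv k
      have : ((∑ j, Aq k j * v j : ℚ) : ℝ) = 0 := by rw [h0]; norm_num
      push_cast at this
      rw [Finset.sum_apply]
      simp only [Pi.smul_apply, smul_eq_mul, Pi.zero_apply]
      calc ∑ i, (v i : ℝ) * a i k = ∑ i, ((Aq k i : ℝ)) * (v i : ℝ) := by
            refine Finset.sum_congr rfl fun i _ => ?_
            rw [hAq k i, mul_comm]
          _ = 0 := this
    funext i
    have := hli hsum i
    exact_mod_cast this
  have hinj : Function.Injective (Matrix.toLin' Aq) := by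
    intro v w hvw
    have : Aq.mulVec (v - w) = 0 := by
      have := sub_eq_zero.mpr hvw
      rw [← map_sub] at this
      simpa [Matrix.toLin'_apply] using this
    have := hmv0 _ this
    exact sub_eq_zero.mp this
  have hsurj : Function.Surjective (Matrix.toLin' Aq) :=
    LinearMap.injective_iff_surjective.mp hinj
  set eA : (Fin n → ℚ) ≃ₗ[ℚ] (Fin n → ℚ) :=
    LinearEquiv.ofBijective (Matrix.toLin' Aq) ⟨hinj, hsurj⟩ with heAdef
  set Mq : Matrix (Fin n) (Fin n) ℚ := LinearMap.toMatrix' (eA.symm : (Fin n → ℚ) →ₗ[ℚ] (Fin n → ℚ)) with hMqdef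
  have heA : ∀ v, eA v = Matrix.toLin' Aq v := fun _ => rfl
  have hMA : Mq * Aq = 1 := by
    have hcomp : (eA.symm : (Fin n → ℚ) →ₗ[ℚ] (Fin n → ℚ)).comp (Matrix.toLin' Aq) = LinearMap.id := by
      apply LinearMap.ext; intro v
      simp only [LinearMap.comp_apply, LinearMap.id_apply, LinearEquiv.coe_coe]
      rw [← heA v]
      exact eA.symm_apply_apply v
    calc Mq * Aq = LinearMap.toMatrix' ((eA.symm : (Fin n → ℚ) →ₗ[ℚ] (Fin n → ℚ)).comp (Matrix.toLin' Aq)) := by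
          rw [LinearMap.toMatrix'_comp, LinearMap.toMatrix'_toLin']
        _ = 1 := by rw [hcomp, LinearMap.toMatrix'_id]
  have hAM : Aq * Mq = 1 := by
    have hcomp : (Matrix.toLin' Aq).comp (eA.symm : (Fin n → ℚ) →ₗ[ℚ] (Fin n → ℚ)) = LinearMap.id := by
      apply LinearMap.ext; intro v
      simp only [LinearMap.comp_apply, LinearMap.id_apply, LinearEquiv.coe_coe]
      rw [← heA (eA.symm v)]
      exact eA.apply_symm_apply v
    calc Aq * Mq = LinearMap.toMatrix' ((Matrix.toLin' Aq).comp (eA.symm : (Fin n → ℚ) →ₗ[ℚ] (Fin n → ℚ))) := by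
          rw [LinearMap.toMatrix'_comp, LinearMap.toMatrix'_toLin']
        _ = 1 := by rw [hcomp, LinearMap.toMatrix'_id]
  -- real versions
  set AR : Matrix (Fin n) (Fin n) ℝ := Aq.map (Rat.castHom ℝ) with hARdef
  set MR : Matrix (Fin n) (Fin n) ℝ := Mq.map (Rat.castHom ℝ) with hMRdef
  have hARMR : AR * MR = 1 := by
    rw [hARdef, hMRdef, ← Matrix.map_mul, hAM]
    exact Matrix.map_one _ (map_zero _) (map_one _)
  set L : (Fin n → ℝ) → (Fin n → ℝ) := fun x => MR.mulVec x with hLdef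
  have hLcont : Continuous L := by
    have h := LinearMap.continuous_of_finiteDimensional (MR.mulVecLin)
    exact h
  have hrecon : ∀ x : Fin n → ℝ, ∑ i, L x i • a i = x := by
    intro x
    funext k
    have h1 : (∑ i, L x i • a i) k = ∑ i, AR k i * L x i := by
      rw [Finset.sum_apply]
      refine Finset.sum_congr rfl fun i _ => ?_
      simp only [Pi.smul_apply, smul_eq_mul, hARdef, Matrix.map_apply, Rat.coe_castHom]
      rw [hAq k i, mul_comm]
    have h2 : ∑ i, AR k i * L x i = (AR.mulVec (MR.mulVec x)) k := by
      simp [hLdef, Matrix.mulVec, dotProduct]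
    rw [h1, h2, Matrix.mulVec_mulVec, hARMR, Matrix.one_mulVec]
  have hLrat : ∀ (x : Fin n → ℝ) (xq : Fin n → ℚ), (∀ j, x j = (xq j : ℝ)) →
      ∀ i, L x i = ((Mq.mulVec xq) i : ℝ) := by
    intro x xq hx i
    simp only [hLdef, Matrix.mulVec, dotProduct, hMRdef, Matrix.map_apply, Rat.coe_castHom]
    push_cast
    refine Finset.sum_congr rfl fun j _ => ?_
    rw [hx j]
  -- monotonicity: adding positive rational combinations of basis vectors does not increase f
  have hmono : ∀ x, x ∈ C → IsRatPoint x → ∀ d : Fin n → ℚ, (∀ i, 0 < d i) →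
      ∀ s : Finset (Fin n),
      (x + ∑ i ∈ s, (d i : ℝ) • a i) ∈ C ∧ IsRatPoint (x + ∑ i ∈ s, (d i : ℝ) • a i) ∧
        f (x + ∑ i ∈ s, (d i : ℝ) • a i) ≤ f x := by
    intro x hxC hxQ d hd s
    induction s using Finset.induction_on with
    | empty =>
      simp only [Finset.sum_empty, add_zero]
      exact ⟨hxC, hxQ, le_refl _⟩
    | insert i s hnot ih =>
      have hterm : ((d i : ℝ)) • a i ∈ C := hcone _ (haC i) _ (by exact_mod_cast hd i)
      have htermQ : IsRatPoint ((d i : ℝ) • a i) := hratsmul _ _ (fun j => ⟨r i j, hr i j⟩)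
      have hrw : x + ∑ j ∈ insert i s, (d j : ℝ) • a j
          = (x + ∑ j ∈ s, (d j : ℝ) • a j) + (d i : ℝ) • a i := by
        rw [Finset.sum_insert hnot]; abel
      obtain ⟨hC1, hQ1, hf1⟩ := ih
      have hfi : f ((d i : ℝ) • a i) = 0 := by
        rw [hhom _ (haC i) (fun j => ⟨r i j, hr i j⟩) _ (hd i), hzero i, mul_zero]
      refine ⟨?_, ?_, ?_⟩
      · rw [hrw]; exact hadd _ hC1 _ hterm
      · rw [hrw]; exact hratadd _ _ hQ1 htermQ
      · rw [hrw]
        calc f ((x + ∑ j ∈ s, (d j : ℝ) • a j) + (d i : ℝ) • a i)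
            ≤ f (x + ∑ j ∈ s, (d j : ℝ) • a j) + f ((d i : ℝ) • a i) :=
              hsub _ hC1 _ hterm hQ1 htermQ
          _ ≤ f x + 0 := by rw [hfi]; exact add_le_add_left hf1 0
          _ = f x := add_zero _
  -- local upper bound for f on rational points
  have hupper : ∀ b ∈ C, ∃ δ > 0, ∃ M ≥ (0:ℝ), Metric.ball b δ ⊆ C ∧
      ∀ x ∈ Metric.ball b δ, IsRatPoint x → f x ≤ M := by
    intro b hb
    obtain ⟨ρ, hρ, hballρ⟩ := Metric.isOpen_iff.mp hopen b hb
    set T : ℝ := ∑ i, ‖a i‖ with hTdef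
    have hT0 : 0 ≤ T := Finset.sum_nonneg fun i _ => norm_nonneg _
    obtain ⟨β, hβ0, hβ⟩ := exists_rat_btwn (show (0:ℝ) < ρ / (2 * (T + 1)) by positivity)
    have hβ0' : (0:ℚ) < β := by exact_mod_cast hβ0
    have hβT : (β : ℝ) * T < ρ := by
      have h2 : (0:ℝ) < 2 * (T + 1) := by positivity
      have h1 : (β : ℝ) * (2 * (T + 1)) < ρ := (lt_div_iff₀ h2).mp hβ
      nlinarith
    -- choose rational coordinates strictly below those of b
    choose q hq1 hq2 using fun i =>
      exists_rat_btwn (show L b i - (β:ℝ) < L b i - (β:ℝ)/2 by linarith)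
    set l : Fin n → ℝ := ∑ i, (q i : ℝ) • a i with hldef
    have hlQ : IsRatPoint l := by
      intro j
      refine ⟨∑ i, q i * r i j, ?_⟩
      rw [hldef, Finset.sum_apply]
      push_cast
      refine Finset.sum_congr rfl fun i _ => ?_
      simp [hr i j]
    have hlb : ‖l - b‖ ≤ (β:ℝ) * T := by
      have : l - b = ∑ i, ((q i : ℝ) - L b i) • a i := by
        calc l - b = ∑ i, (q i : ℝ) • a i - ∑ i, L b i • a i := by rw [hldef, hrecon b]
          _ = ∑ i, ((q i : ℝ) • a i - L b i • a i) := by rw [Finset.sum_sub_distrib]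
          _ = ∑ i, ((q i : ℝ) - L b i) • a i :=
              Finset.sum_congr rfl fun i _ => (sub_smul _ _ _).symm
      rw [this]
      calc ‖∑ i, ((q i : ℝ) - L b i) • a i‖ ≤ ∑ i, ‖((q i : ℝ) - L b i) • a i‖ :=
            norm_sum_le _ _
        _ ≤ ∑ i, (β:ℝ) * ‖a i‖ := by
            refine Finset.sum_le_sum fun i _ => ?_
            have h1 : |(q i : ℝ) - L b i| ≤ (β:ℝ) := by
              rw [abs_le]
              constructor <;> [linarith [hq1 i]; linarith [hq2 i, hβ0]]
            rw [norm_smul, Real.norm_eq_abs]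
            exact mul_le_mul_of_nonneg_right h1 (norm_nonneg _)
        _ = (β:ℝ) * T := by rw [hTdef, Finset.mul_sum]
    have hlC : l ∈ C := by
      apply hballρ
      rw [Metric.mem_ball, dist_eq_norm]
      exact lt_of_le_of_lt hlb hβT
    -- continuity of L near b
    obtain ⟨δ₁, hδ₁, hδ₁L⟩ := Metric.continuous_iff.mp hLcont b ((β:ℝ)/4) (by positivity)
    refine ⟨min δ₁ ρ, by positivity, f l, hnonneg l hlC hlQ, ?_, ?_⟩
    · exact fun y hy => hballρ (Metric.mem_ball.mpr (lt_of_lt_of_le (Metric.mem_ball.mp hy) (min_le_right _ _)))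
    · intro x hx hxQ
      choose xq hxq using hxQ
      have hxball : dist x b < δ₁ := lt_of_lt_of_le (Metric.mem_ball.mp hx) (min_le_left _ _)
      have hLclose : ∀ i, |L x i - L b i| < (β:ℝ)/4 := by
        intro i
        have h3 := hδ₁L x hxball
        have h2 := dist_le_pi_dist (L x) (L b) i
        rw [Real.dist_eq] at h2
        exact lt_of_le_of_lt h2 h3
      set d : Fin n → ℚ := fun i => (Mq.mulVec xq) i - q i with hddef
      have hdpos : ∀ i, 0 < d i := by
        intro i
        have hLx : L x i = ((Mq.mulVec xq) i : ℝ) := hLrat x xq hxq i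
        have h1 : L b i - (β:ℝ)/4 < L x i := by
          have := hLclose i; rw [abs_lt] at this; linarith [this.2]
        have h2 : ((Mq.mulVec xq) i : ℝ) - (q i : ℝ) > 0 := by
          rw [← hLx]
          have := hq2 i
          linarith
        have : ((d i : ℝ)) > 0 := by rw [hddef]; push_cast; linarith
        exact_mod_cast this
      have hxl : x = l + ∑ i, (d i : ℝ) • a i := by
        rw [hldef, ← Finset.sum_add_distrib]
        nth_rewrite 1 [← hrecon x]
        refine Finset.sum_congr rfl fun i _ => ?_
        rw [← add_smul]
        congr 1
        rw [hLrat x xq hxq i, hddef]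
        push_cast
        ring
      rw [hxl]
      exact (hmono l hlC hlQ d hdpos Finset.univ).2.2
  -- local uniform continuity of f on rational points
  have hUC : ∀ b ∈ C, ∀ ε > (0:ℝ), ∃ δ > 0, Metric.ball b δ ⊆ C ∧
      ∀ x ∈ Metric.ball b δ, ∀ y ∈ Metric.ball b δ, IsRatPoint x → IsRatPoint y →
        |f x - f y| ≤ ε := by
    intro b hb ε hε
    obtain ⟨δ₀, hδ₀, M, hM0, hballC, hbound⟩ := hupper b hb
    set rr : ℝ := δ₀ / 3 with hrrdef
    have hrr : 0 < rr := by positivity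
    obtain ⟨t, ht0, ht1⟩ := exists_rat_btwn (show (0:ℝ) < min 1 (ε / (M + 1)) by positivity)
    have ht0' : (0:ℚ) < t := by exact_mod_cast ht0
    have htlt1 : (t : ℝ) < 1 := lt_of_lt_of_le ht1 (min_le_left _ _)
    have htM : (t : ℝ) * M ≤ ε := by
      have h1 : (t : ℝ) < ε / (M + 1) := lt_of_lt_of_le ht1 (min_le_right _ _)
      rw [lt_div_iff₀ (by linarith)] at h1
      nlinarith
    set δ : ℝ := (t : ℝ) * rr / 2 with hδdef
    have hδpos : 0 < δ := by positivity
    have hδlt : δ < rr := by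
      rw [hδdef]
      nlinarith
    have hsub₀ : Metric.ball b δ ⊆ Metric.ball b δ₀ := by
      apply Metric.ball_subset_ball
      rw [hrrdef] at hδlt
      linarith
    -- main one-sided estimate
    have main : ∀ x ∈ Metric.ball b δ, ∀ y ∈ Metric.ball b δ, IsRatPoint x → IsRatPoint y →
        f y - f x ≤ ε := by
      intro x hx y hy hxQ hyQ
      have hxC : x ∈ C := hballC (hsub₀ hx)
      have hyC : y ∈ C := hballC (hsub₀ hy)
      set z : Fin n → ℝ := x + ((t:ℝ))⁻¹ • (y - x) with hzdef
      have hzQ : IsRatPoint z := by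
        intro j
        obtain ⟨qx, hqx⟩ := hxQ j; obtain ⟨qy, hqy⟩ := hyQ j
        refine ⟨qx + t⁻¹ * (qy - qx), ?_⟩
        rw [hzdef]
        simp only [Pi.add_apply, Pi.smul_apply, Pi.sub_apply, smul_eq_mul]
        rw [hqx, hqy]
        push_cast [Rat.cast_inv]
        ring
      have hzball : z ∈ Metric.ball b δ₀ := by
        rw [Metric.mem_ball]
        have h1 : dist z b ≤ dist z x + dist x b := dist_triangle _ _ _
        have h2 : dist z x = ((t:ℝ))⁻¹ * ‖y - x‖ := by
          rw [dist_eq_norm, hzdef]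
          simp only [add_sub_cancel_left]
          rw [norm_smul, Real.norm_eq_abs, abs_inv, abs_of_pos (by exact_mod_cast ht0)]
        have h3 : ‖y - x‖ < 2 * δ := by
          have := dist_triangle y b x
          rw [← dist_eq_norm]
          calc dist y x ≤ dist y b + dist b x := this
            _ < δ + δ := by
                rw [dist_comm b x]
                exact add_lt_add (Metric.mem_ball.mp hy) (Metric.mem_ball.mp hx)
            _ = 2 * δ := by ring
        have h4 : ((t:ℝ))⁻¹ * ‖y - x‖ < ((t:ℝ))⁻¹ * (2 * δ) := by
          apply mul_lt_mul_of_pos_left h3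
          exact inv_pos.mpr (by exact_mod_cast ht0)
        have h5 : ((t:ℝ))⁻¹ * (2 * δ) = rr := by
          rw [hδdef]
          field_simp
        have h6 : dist x b < δ := Metric.mem_ball.mp hx
        have : dist z b < rr + δ := by
          calc dist z b ≤ dist z x + dist x b := h1
            _ < rr + δ := by rw [h2]; exact add_lt_add (by rw [← h5]; exact h4) h6
        rw [hrrdef] at this hδlt
        linarith
      have hzC : z ∈ C := hballC hzball
      have hfz : f z ≤ M := hbound z hzball hzQ
      have hfznn : 0 ≤ f z := hnonneg z hzC hzQ
      have hfxnn : 0 ≤ f x := hnonneg x hxC hxQ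
      -- y = (1-t) • x + t • z
      have hyz : y = ((1 - t : ℚ) : ℝ) • x + ((t:ℚ) : ℝ) • z := by
        rw [hzdef]
        push_cast
        rw [smul_add, smul_smul, mul_inv_cancel₀ (by exact_mod_cast ne_of_gt ht0'), one_smul]
        module
      have ht1' : (0:ℚ) < 1 - t := by
        have : (t:ℝ) < 1 := htlt1
        have : t < 1 := by exact_mod_cast this
        linarith
      have h1C : ((1 - t : ℚ) : ℝ) • x ∈ C := hcone _ hxC _ (by exact_mod_cast ht1')
      have h2C : ((t:ℚ) : ℝ) • z ∈ C := hcone _ hzC _ (by exact_mod_cast ht0')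
      have hfy : f y ≤ ((1 - t : ℚ):ℝ) * f x + ((t:ℚ):ℝ) * f z := by
        rw [hyz]
        calc f (((1 - t : ℚ) : ℝ) • x + ((t:ℚ) : ℝ) • z)
            ≤ f (((1 - t : ℚ) : ℝ) • x) + f (((t:ℚ) : ℝ) • z) :=
              hsub _ h1C _ h2C (hratsmul _ _ hxQ) (hratsmul _ _ hzQ)
          _ = ((1 - t : ℚ):ℝ) * f x + ((t:ℚ):ℝ) * f z := by
              rw [hhom _ hxC hxQ _ ht1', hhom _ hzC hzQ _ ht0']
      have : f y - f x ≤ (t:ℝ) * (f z - f x) := by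
        have := hfy
        push_cast at this ⊢
        nlinarith
      calc f y - f x ≤ (t:ℝ) * (f z - f x) := this
        _ ≤ (t:ℝ) * M := by
            apply mul_le_mul_of_nonneg_left _ (le_of_lt (by exact_mod_cast ht0'))
            linarith
        _ ≤ ε := htM
    refine ⟨δ, hδpos, fun w hw => hballC (hsub₀ hw), ?_⟩
    intro x hx y hy hxQ hyQ
    rw [abs_sub_le_iff]
    exact ⟨main y hy x hx hyQ hxQ, main x hx y hy hxQ hyQ⟩
  -- density of rational points
  set S : Set ↥C := {x : ↥C | IsRatPoint x.val} with hSdef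
  have hdenseS : Dense S := by
    rw [Metric.dense_iff]
    intro x ε hε
    obtain ⟨ρ, hρ, hballρ⟩ := Metric.isOpen_iff.mp hopen x.val x.2
    set ε' : ℝ := min ε ρ with hε'def
    have hε' : 0 < ε' := lt_min hε hρ
    choose q hq1 hq2 using fun j => exists_rat_btwn (show x.val j < x.val j + ε'/2 by linarith)
    set y : Fin n → ℝ := fun j => (q j : ℝ) with hydef
    have hdist : dist y x.val < ε' := by
      rcases Nat.eq_zero_or_pos n with hn | hn
      · subst hn
        have : y = x.val := by funext j; exact absurd j.2 (by omega)
        rw [this, dist_self]; exact hε'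
      · rw [dist_pi_lt_iff hε']
        intro j
        rw [Real.dist_eq, abs_lt]
        constructor <;> [linarith [hq1 j]; linarith [hq2 j]]
    have hyC : y ∈ C := hballρ (Metric.mem_ball.mpr (lt_of_lt_of_le hdist (min_le_right _ _)))
    refine ⟨⟨y, hyC⟩, ?_, ?_⟩
    · rw [Metric.mem_ball]
      exact lt_of_lt_of_le hdist (min_le_left _ _)
    · exact fun j => ⟨q j, rfl⟩
  -- the dense inducing map
  set e : S → ↥C := Subtype.val with hedef
  have di : IsDenseInducing e := ⟨Topology.IsInducing.subtypeVal, hdenseS.denseRange_val⟩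
  set φ : S → ℝ := fun p => f p.val.val with hφdef
  have hφcont : Continuous φ := by
    rw [Metric.continuous_iff]
    intro p ε hε
    obtain ⟨δ, hδpos, hδC, hδ⟩ := hUC p.val.val p.val.2 (ε/2) (by linarith)
    refine ⟨δ, hδpos, ?_⟩
    intro pq hpq
    have hd : dist pq.val.val p.val.val < δ := hpq
    have h1 : pq.val.val ∈ Metric.ball p.val.val δ := Metric.mem_ball.mpr hd
    have h2 : p.val.val ∈ Metric.ball p.val.val δ := Metric.mem_ball_self hδpos
    have := hδ _ h1 _ h2 pq.2 p.2
    rw [Real.dist_eq]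
    calc |φ pq - φ p| ≤ ε/2 := this
      _ < ε := by linarith
  have hlim : ∀ b : ↥C, ∃ c, Filter.Tendsto φ (Filter.comap e (nhds b)) (nhds c) := by
    intro b
    haveI : (Filter.comap e (nhds b)).NeBot := di.comap_nhds_neBot b
    have hcauchy : Cauchy (Filter.map φ (Filter.comap e (nhds b))) := by
      rw [Metric.cauchy_iff]
      refine ⟨Filter.map_neBot, ?_⟩
      intro ε hε
      obtain ⟨δ, hδpos, hδC, hδ⟩ := hUC b.val b.2 (ε/2) (by linarith)
      set V : Set ↥C := Subtype.val ⁻¹' (Metric.ball b.val δ) with hVdef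
      have hVnhds : V ∈ nhds b := by
        apply IsOpen.mem_nhds
        · exact (Metric.isOpen_ball).preimage continuous_subtype_val
        · exact Metric.mem_ball_self hδpos
      refine ⟨φ '' (e ⁻¹' V), Filter.image_mem_map (Filter.preimage_mem_comap hVnhds), ?_⟩
      rintro u ⟨p, hp, rfl⟩ v ⟨pq, hpq, rfl⟩
      rw [Real.dist_eq]
      have h1 : p.val.val ∈ Metric.ball b.val δ := hp
      have h2 : pq.val.val ∈ Metric.ball b.val δ := hpq
      calc |φ p - φ pq| ≤ ε/2 := hδ _ h1 _ h2 p.2 pq.2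
        _ < ε := by linarith
    obtain ⟨c, hc⟩ := CompleteSpace.complete hcauchy
    exact ⟨c, hc⟩
  set g : ↥C → ℝ := di.extend φ with hgdef
  have hgcont : Continuous g := di.continuous_extend hlim
  have hgeq : ∀ x : ↥C, IsRatPoint x.val → g x = f x.val := by
    intro x hx
    have : g (e ⟨x, hx⟩) = φ ⟨x, hx⟩ := di.extend_eq hφcont ⟨x, hx⟩
    simpa [hedef, hφdef] using this
  refine ⟨g, ⟨hgcont, hgeq⟩, ?_⟩
  rintro g' ⟨hg'c, hg'⟩
  apply Continuous.ext_on hdenseS hg'c hgcont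
  intro x hx
  rw [hg' x hx, hgeq x hx]
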